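/- arXiv:1402.3999 — 2 statements merged into one kernel-verified Lean document; each statement's English description precedes it below -/
import Mathlib

section
/- One has 𝓒 ⊆ 𝓐^uni, and for every A ∈ 𝓒 the value assigned by α agrees with natural density: α(A) = λ(log(A)) = λ(A). -/
open MeasureTheory Filter Set Topology

noncomputable section

namespace UPN

/-- The half line `[0,∞)` viewed as a subset of `ℝ`. -/
def Ray : Set ℝ := Set.Ici 0

/-- The indicator function `1_A`. -/
def ind (A : Set ℝ) : ℝ → ℝ := Set.indicator A fun _ => (1 : ℝ)

/-- The collection `𝓜` of countable unions `⋃ᵢ [a_{2i-1}, a_{2i})` for a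
nondecreasing nonnegative sequence `a`. -/
def Mcal : Set (Set ℝ) :=
  {A | ∃ a : ℕ → ℝ, 0 ≤ a 0 ∧ Monotone a ∧
        A = ⋃ i : ℕ, Set.Ico (a (2 * i)) (a (2 * i + 1))}

/-- The density function `ρ_A`: `ρ_A(0) = 0` and `ρ_A(x) = (1/x)∫₀ˣ 1_A(y) dy`. -/
def rho (A : Set ℝ) (x : ℝ) : ℝ :=
  if x = 0 then 0 else (1 / x) * ∫ y in (0:ℝ)..x, ind A y

/-- The collection `𝓒` of elements of `𝓜` having natural density. -/
def Ccal : Set (Set ℝ) :=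
  {A | A ∈ Mcal ∧ ∃ l : ℝ, Tendsto (rho A) atTop (𝓝 l)}

/-- The natural density `λ(A) = lim_{x→∞} ρ_A(x)`. -/
def lam (A : Set ℝ) : ℝ := limUnder atTop (rho A)

/-- `S_A(x) = m(A ∩ [0,x))`. -/
def Sfn (A : Set ℝ) (x : ℝ) : ℝ := (volume (A ∩ Set.Ico 0 x)).toReal

/-- The thinning operation `A ∘ B = {x : x ∈ A ∧ S_A(x) ∈ B}`. -/
def thin (A B : Set ℝ) : Set ℝ := {x | x ∈ A ∧ Sfn A x ∈ B}

/-- An f-system on `[0,∞)`: a nonempty collection of subsets of `[0,∞)` closed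
under complements (in `[0,∞)`) and finite disjoint unions. -/
structure IsFSystem (F : Set (Set ℝ)) : Prop where
  nonempty : F.Nonempty
  subset_ray : ∀ A ∈ F, A ⊆ Ray
  compl_mem : ∀ A ∈ F, Ray \ A ∈ F
  union_mem : ∀ A ∈ F, ∀ B ∈ F, A ∩ B = ∅ → A ∪ B ∈ F

/-- A probability pair `(F, μ)` on `[0,∞)`: `F` is an f-system and `μ` is a finitely
additive probability measure on `F` with values in `[0,1]` and `μ([0,∞)) = 1`. -/
structure IsProbPair (F : Set (Set ℝ)) (μ : Set ℝ → ℝ) : Prop where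
  fsystem : IsFSystem F
  nonneg : ∀ A ∈ F, 0 ≤ μ A
  le_one : ∀ A ∈ F, μ A ≤ 1
  ray_eq_one : μ Ray = 1
  additive : ∀ A ∈ F, ∀ B ∈ F, A ∩ B = ∅ → μ (A ∪ B) = μ A + μ B

/-- A weakly thinnable pair (WTP). -/
structure IsWTP (F : Set (Set ℝ)) (μ : Set ℝ → ℝ) : Prop where
  pair : IsProbPair F μ
  Ccal_subset : Ccal ⊆ F
  subset_Mcal : F ⊆ Mcal
  P1 : ∀ C ∈ Ccal, ∀ A ∈ F, thin C A ∈ F ∧ μ (thin C A) = μ C * μ A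
  P2 : ∀ A ∈ F, ∀ B ∈ F, (∀ x : ℝ, Sfn B x ≤ Sfn A x) → μ B ≤ μ A
  P3 : ∀ c : ℝ, 0 ≤ c → μ (Set.Ici c) = 1

/-- Coherence of a probability measure `μ` on an f-system `F` on `[0,∞)`. -/
def Coherent (F : Set (Set ℝ)) (μ : Set ℝ → ℝ) : Prop :=
  ∀ (n : ℕ) (a : Fin n → ℝ) (A : Fin n → Set ℝ), (∀ i, A i ∈ F) →
    0 ≤ ⨆ x : Ray, ∑ i, a i * (ind (A i) ↑x - μ (A i))

/-- `σ_A(D,x) = (1/D) ∫_x^{x+D} 1_A(y) dy`. -/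
def sigmaFn (A : Set ℝ) (D x : ℝ) : ℝ := (1 / D) * ∫ y in x..(x + D), ind A y

/-- `U(A) = limsup_{D→∞} sup_{x>0} σ_A(D,x)`. -/
def Ufn (A : Set ℝ) : ℝ :=
  limsup (fun D => ⨆ x : Set.Ioi (0:ℝ), sigmaFn A D ↑x) atTop

/-- `L(A) = liminf_{D→∞} inf_{x>0} σ_A(D,x)`. -/
def Lfn (A : Set ℝ) : ℝ :=
  liminf (fun D => ⨅ x : Set.Ioi (0:ℝ), sigmaFn A D ↑x) atTop

/-- `𝓦^uni = {A ∈ 𝓜 : L(A) = U(A)}`. -/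
def Wuni : Set (Set ℝ) := {A | A ∈ Mcal ∧ Lfn A = Ufn A}

/-- `log(A) = {log a : a ∈ A ∩ [1,∞)}`. -/
def logSet (A : Set ℝ) : Set ℝ := Real.log '' (A ∩ Set.Ici 1)

/-- `𝓐^uni = {A ∈ 𝓜 : log(A) ∈ 𝓦^uni}`. -/
def Auni : Set (Set ℝ) := {A | A ∈ Mcal ∧ logSet A ∈ Wuni}

/-- `α(A) = λ(log(A))`. -/
def alphaFn (A : Set ℝ) : ℝ := lam (logSet A)

/-- `ξ_A(D,x) = (1/log D) ∫_x^{Dx} ρ_A(y)/y dy`. -/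
def xi (A : Set ℝ) (D x : ℝ) : ℝ :=
  (1 / Real.log D) * ∫ y in x..(D * x), rho A y / y

/-- Membership in `𝓟`: `s` is a sequence in `(1,∞)` tending to `∞` and `f` is a
sequence in `(1,∞)`. -/
def memP (s f : ℕ → ℝ) : Prop :=
  (∀ n, 1 < s n) ∧ Tendsto s atTop atTop ∧ ∀ n, 1 < f n

/-- `𝓐^{s,f} = {A ∈ 𝓜 : lim_n ξ_A(s_n,f_n) exists}`. -/
def Asf (s f : ℕ → ℝ) : Set (Set ℝ) :=
  {A | A ∈ Mcal ∧ ∃ l : ℝ, Tendsto (fun n => xi A (s n) (f n)) atTop (𝓝 l)}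

/-- `α^{s,f}(A) = lim_n ξ_A(s_n,f_n)`. -/
def alphasf (s f : ℕ → ℝ) (A : Set ℝ) : ℝ :=
  limUnder atTop fun n => xi A (s n) (f n)

/-- `τ_A(C,j)`; here `j : ℕ` starting from `0` corresponds to the interval
`[C^j, C^{j+1})`, i.e. to the paper's `τ_A(C, j+1)`. -/
def tau (A : Set ℝ) (C : ℝ) (j : ℕ) : ℝ :=
  (1 / (C ^ j * (C - 1))) * ∫ y in (C ^ j : ℝ)..(C ^ (j + 1)), ind A y

/-- `U^*(C,A) = limsup_{n→∞} sup_k (1/n) Σ_{j=k}^{k+n-1} τ_A(C,j)`. -/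
def Ustar (C : ℝ) (A : Set ℝ) : ℝ :=
  limsup (fun n : ℕ => ⨆ k : ℕ, (1 / (n : ℝ)) * ∑ i ∈ Finset.range n, tau A C (k + i)) atTop

/-! ### Auxiliary lemmas for `stmt2` -/

section Aux

variable {A : Set ℝ}

lemma ind_nonneg (A : Set ℝ) (x : ℝ) : 0 ≤ ind A x :=
  Set.indicator_nonneg (fun _ _ => zero_le_one) x

lemma ind_le_one (A : Set ℝ) (x : ℝ) : ind A x ≤ 1 := by
  unfold ind; by_cases h : x ∈ A <;> simp [h]

lemma mem_Mcal_measurableSet (hA : A ∈ Mcal) : MeasurableSet A := by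
  obtain ⟨a, -, -, rfl⟩ := hA
  exact MeasurableSet.iUnion fun i => measurableSet_Ico

lemma ind_measurable (hA : MeasurableSet A) : Measurable (ind A) :=
  measurable_const.indicator hA

/-- `R(x) = ∫₀ˣ 1_A`. -/
def Rfun (A : Set ℝ) (x : ℝ) : ℝ := ∫ y in (0:ℝ)..x, ind A y

lemma intervalIntegrable_ind (hA : MeasurableSet A) (u v : ℝ) :
    IntervalIntegrable (ind A) volume u v := by
  constructor <;>
  · apply Measure.integrableOn_of_bounded (M := 1) measure_Ioc_lt_top.ne
      (ind_measurable hA).aestronglyMeasurable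
    filter_upwards with t
    rw [Real.norm_eq_abs, abs_of_nonneg (ind_nonneg A t)]
    exact ind_le_one A t

lemma rho_eq {x : ℝ} (hx : x ≠ 0) : rho A x = Rfun A x / x := by
  rw [rho, if_neg hx, Rfun]; ring

lemma Rfun_continuous (hA : MeasurableSet A) : Continuous (Rfun A) :=
  intervalIntegral.continuous_primitive (fun a b => intervalIntegrable_ind hA a b) 0

lemma intervalIntegrable_ind_div (hA : MeasurableSet A) {p q : ℝ} (hp : 0 < p)
    (hpq : p ≤ q) : IntervalIntegrable (fun t => ind A t / t) volume p q := by
  rw [intervalIntegrable_iff_integrableOn_Ioc_of_le hpq]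
  apply Measure.integrableOn_of_bounded (M := 1 / p) measure_Ioc_lt_top.ne
    ((ind_measurable hA).div measurable_id).aestronglyMeasurable
  rw [ae_restrict_iff' measurableSet_Ioc]
  filter_upwards with t ht
  have htp : p < t := ht.1
  rw [Real.norm_eq_abs, Pi.div_apply, abs_div, abs_of_nonneg (ind_nonneg A t), id_eq,
    abs_of_pos (hp.trans htp)]
  exact div_le_div₀ zero_le_one (ind_le_one A t) hp htp.le

lemma intervalIntegrable_Rdiv (hA : MeasurableSet A) {p q : ℝ} (hp : 0 < p)
    (hpq : p ≤ q) : IntervalIntegrable (fun t => Rfun A t / t ^ 2) volume p q := by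
  apply ContinuousOn.intervalIntegrable
  apply ((Rfun_continuous hA).continuousOn).div (continuousOn_pow 2)
  intro t ht
  rw [Set.uIcc_of_le hpq] at ht
  have h0 : 0 < t := lt_of_lt_of_le hp ht.1
  positivity

/-- Right-local constancy of the indicator of a set in `𝓜`. -/
lemma exists_right_const (hA : A ∈ Mcal) (x : ℝ) :
    ∃ δ > 0, ∀ t ∈ Set.Ioc x (x + δ), ind A t = ind A x := by
  classical
  obtain ⟨a, -, hmono, rfl⟩ := hA
  obtain ⟨δ, hδ, hno⟩ : ∃ δ > 0, ∀ n, a n ∉ Set.Ioc x (x + δ) := by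
    by_cases h : ∃ n, x < a n
    · set N := Nat.find h with hN
      have hxN : x < a N := Nat.find_spec h
      refine ⟨(a N - x) / 2, by linarith, fun n hn => ?_⟩
      have h1 : x < a n := hn.1
      have h2 : a N ≤ a n := hmono (Nat.find_min' h h1)
      have := hn.2
      linarith
    · push_neg at h
      exact ⟨1, one_pos, fun n hn => absurd hn.1 (not_lt.2 (h n))⟩
  refine ⟨δ, hδ, fun t ht => ?_⟩
  have key : (t ∈ ⋃ i : ℕ, Set.Ico (a (2 * i)) (a (2 * i + 1))) ↔
      (x ∈ ⋃ i : ℕ, Set.Ico (a (2 * i)) (a (2 * i + 1))) := by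
    simp only [Set.mem_iUnion, Set.mem_Ico]
    constructor
    · rintro ⟨i, h1, h2⟩
      refine ⟨i, ?_, ?_⟩
      · by_contra hc
        push_neg at hc
        exact hno (2 * i) ⟨hc, h1.trans ht.2⟩
      · exact ht.1.trans h2
    · rintro ⟨i, h1, h2⟩
      refine ⟨i, h1.trans ht.1.le, ?_⟩
      by_contra hc
      push_neg at hc
      exact hno (2 * i + 1) ⟨h2, hc.trans ht.2⟩
  unfold ind
  by_cases hx : x ∈ ⋃ i : ℕ, Set.Ico (a (2 * i)) (a (2 * i + 1))
  · rw [Set.indicator_of_mem (key.2 hx), Set.indicator_of_mem hx]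
  · rw [Set.indicator_of_notMem (fun h => hx (key.1 h)), Set.indicator_of_notMem hx]

lemma hasDerivWithinAt_Rfun (hA : A ∈ Mcal) (x : ℝ) :
    HasDerivWithinAt (Rfun A) (ind A x) (Set.Ioi x) x := by
  have hAm := mem_Mcal_measurableSet hA
  obtain ⟨δ, hδ, hconst⟩ := exists_right_const hA x
  have heq : ∀ t ∈ Set.Ioc x (x + δ), Rfun A t = Rfun A x + ind A x * (t - x) := by
    intro t ht
    have hsplit : Rfun A x + ∫ y in x..t, ind A y = Rfun A t :=
      intervalIntegral.integral_add_adjacent_intervals (intervalIntegrable_ind hAm 0 x)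
        (intervalIntegrable_ind hAm x t)
    have hcongr : ∫ y in x..t, ind A y = ∫ y in x..t, ind A x := by
      apply intervalIntegral.integral_congr
      intro s hs
      rw [Set.uIcc_of_le ht.1.le] at hs
      rcases eq_or_lt_of_le hs.1 with h | h
      · rw [← h]
      · exact hconst s ⟨h, hs.2.trans ht.2⟩
    rw [← hsplit, hcongr, intervalIntegral.integral_const, smul_eq_mul]
    ring
  have hlin : HasDerivWithinAt (fun t => Rfun A x + ind A x * (t - x)) (ind A x)
      (Set.Ioi x) x := by
    have h1 : HasDerivAt (fun t : ℝ => Rfun A x + ind A x * (t - x)) (ind A x) x := by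
      simpa using (((hasDerivAt_id x).sub_const x).const_mul (ind A x)).const_add (Rfun A x)
    exact h1.hasDerivWithinAt
  apply hlin.congr_of_eventuallyEq ?_ (by ring)
  filter_upwards [Ioc_mem_nhdsGT_of_mem ⟨le_refl x, lt_add_of_pos_right x hδ⟩] with t ht
  rw [heq t ht]

lemma parts_identity (hA : A ∈ Mcal) {p q : ℝ} (hp : 1 ≤ p) (hpq : p ≤ q) :
    ∫ t in p..q, ind A t / t =
      Rfun A q / q - Rfun A p / p + ∫ t in p..q, Rfun A t / t ^ 2 := by
  have hAm := mem_Mcal_measurableSet hA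
  have hp0 : (0:ℝ) < p := lt_of_lt_of_le one_pos hp
  have hint1 := intervalIntegrable_ind_div hAm hp0 hpq
  have hint2 := intervalIntegrable_Rdiv hAm hp0 hpq
  have key : ∫ t in p..q, (ind A t / t - Rfun A t / t ^ 2) =
      Rfun A q / q - Rfun A p / p := by
    have := intervalIntegral.integral_eq_sub_of_hasDeriv_right_of_le hpq
      (f := fun t => Rfun A t / t) (f' := fun t => ind A t / t - Rfun A t / t ^ 2)
      ?_ ?_ (hint1.sub hint2)
    · simpa using this
    · apply ((Rfun_continuous hAm).continuousOn).div continuousOn_id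
      intro t ht
      exact ne_of_gt (lt_of_lt_of_le hp0 ht.1)
    · intro x hx
      have hx0 : (0:ℝ) < x := lt_of_lt_of_le hp0 hx.1.le
      have hR := hasDerivWithinAt_Rfun hA x
      have hinv : HasDerivWithinAt (fun t : ℝ => t⁻¹) (-(x ^ 2)⁻¹) (Set.Ioi x) x :=
        (hasDerivAt_inv hx0.ne').hasDerivWithinAt
      have := hR.mul hinv
      have heq : ind A x * x⁻¹ + Rfun A x * -(x ^ 2)⁻¹ =
          ind A x / x - Rfun A x / x ^ 2 := by ring
      rw [heq] at this
      apply this.congr_of_eventuallyEq ?_ (by simp only [Pi.mul_apply, div_eq_mul_inv])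
      filter_upwards [self_mem_nhdsWithin] with t (ht : x < t)
      simp only [Pi.mul_apply, div_eq_mul_inv]
  rw [intervalIntegral.integral_sub hint1 hint2] at key
  linarith

lemma core_estimate (hA : A ∈ Mcal) {l T ε : ℝ} (hT : 1 ≤ T) (hε : 0 ≤ ε)
    (hb : ∀ t, T ≤ t → |rho A t - l| ≤ ε) {p q : ℝ} (hp : T ≤ p) (hpq : p ≤ q) :
    |(∫ t in p..q, ind A t / t) - l * (Real.log q - Real.log p)| ≤
      2 * ε + ε * (Real.log q - Real.log p) := by
  have hAm := mem_Mcal_measurableSet hA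
  have hp1 : 1 ≤ p := hT.trans hp
  have hp0 : (0:ℝ) < p := lt_of_lt_of_le one_pos hp1
  have hq0 : (0:ℝ) < q := lt_of_lt_of_le hp0 hpq
  have hlog : 0 ≤ Real.log q - Real.log p := by
    have := Real.log_le_log hp0 hpq
    linarith
  -- the boundary terms
  have hRl : ∀ t, T ≤ t → |Rfun A t / t - l| ≤ ε := by
    intro t ht
    have ht0 : t ≠ 0 := ne_of_gt (lt_of_lt_of_le (lt_of_lt_of_le one_pos hT) ht)
    rw [← rho_eq ht0]
    exact hb t ht
  -- the integral term
  have hmid : |(∫ t in p..q, Rfun A t / t ^ 2) - l * (Real.log q - Real.log p)| ≤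
      ε * (Real.log q - Real.log p) := by
    have hsub : (∫ t in p..q, Rfun A t / t ^ 2) - l * (Real.log q - Real.log p) =
        ∫ t in p..q, (Rfun A t - l * t) / t ^ 2 := by
      have h1 : ∫ t in p..q, l * t / t ^ 2 = l * (Real.log q - Real.log p) := by
        have hcongr : ∫ t in p..q, l * t / t ^ 2 = ∫ t in p..q, l * t⁻¹ := by
          apply intervalIntegral.integral_congr
          intro s hs
          rw [Set.uIcc_of_le hpq] at hs
          have hs0 : s ≠ 0 := ne_of_gt (lt_of_lt_of_le hp0 hs.1)
          field_simp
        rw [hcongr, intervalIntegral.integral_const_mul, integral_inv,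
          Real.log_div hq0.ne' hp0.ne']
        rw [Set.uIcc_of_le hpq]
        rintro ⟨h1, h2⟩
        linarith
      have h2 : ∫ t in p..q, (Rfun A t - l * t) / t ^ 2 =
          (∫ t in p..q, Rfun A t / t ^ 2) - ∫ t in p..q, l * t / t ^ 2 := by
        rw [← intervalIntegral.integral_sub (intervalIntegrable_Rdiv hAm hp0 hpq)]
        · apply intervalIntegral.integral_congr
          intro s hs
          ring
        · apply ContinuousOn.intervalIntegrable
          apply (continuousOn_const.mul continuousOn_id).div (continuousOn_pow 2)
          intro t ht
          rw [Set.uIcc_of_le hpq] at ht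
          have : 0 < t := lt_of_lt_of_le hp0 ht.1
          positivity
      rw [h2, h1]
    rw [hsub]
    have hbound : ∀ s ∈ Set.Ioc p q, |(Rfun A s - l * s) / s ^ 2| ≤ ε * s⁻¹ := by
      intro s hs
      have hs0 : (0:ℝ) < s := lt_of_lt_of_le hp0 hs.1.le
      have hsT : T ≤ s := hp.trans hs.1.le
      have h1 : |Rfun A s - l * s| ≤ ε * s := by
        have := hRl s hsT
        have heq : Rfun A s - l * s = s * (Rfun A s / s - l) := by field_simp
        rw [heq, abs_mul, abs_of_pos hs0]
        calc s * |Rfun A s / s - l| ≤ s * ε := by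
              exact mul_le_mul_of_nonneg_left this hs0.le
          _ = ε * s := by ring
      rw [abs_div, abs_of_pos (by positivity : (0:ℝ) < s ^ 2)]
      rw [div_le_iff₀ (by positivity : (0:ℝ) < s ^ 2)]
      calc |Rfun A s - l * s| ≤ ε * s := h1
        _ = ε * s⁻¹ * s ^ 2 := by field_simp
    have hintg : IntervalIntegrable (fun t => ε * t⁻¹) volume p q := by
      apply ContinuousOn.intervalIntegrable
      apply continuousOn_const.mul (continuousOn_inv₀.mono ?_)
      rw [Set.uIcc_of_le hpq]
      intro t ht
      exact ne_of_gt (lt_of_lt_of_le hp0 ht.1)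
    have hval : ∫ t in p..q, ε * t⁻¹ = ε * (Real.log q - Real.log p) := by
      rw [intervalIntegral.integral_const_mul, integral_inv,
        Real.log_div hq0.ne' hp0.ne']
      rw [Set.uIcc_of_le hpq]
      rintro ⟨h1, h2⟩
      linarith
    have habs := intervalIntegral.norm_integral_le_abs_of_norm_le
      (f := fun t => (Rfun A t - l * t) / t ^ 2) (g := fun t => ε * t⁻¹) (μ := volume)
      (a := p) (b := q) ?_ hintg
    · rw [Real.norm_eq_abs, hval, abs_of_nonneg (mul_nonneg hε hlog)] at habs
      exact habs
    · rw [ae_restrict_iff' measurableSet_uIoc]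
      filter_upwards with t ht
      rw [Set.uIoc_of_le hpq] at ht
      rw [Real.norm_eq_abs]
      have := hbound t ht
      calc |(Rfun A t - l * t) / t ^ 2| ≤ ε * t⁻¹ := this
        _ = ε * t⁻¹ := rfl
  have hparts := parts_identity hA hp1 hpq
  have h1 := hRl p hp
  have h2 := hRl q (hp.trans hpq)
  rw [hparts]
  have expand : Rfun A q / q - Rfun A p / p + (∫ t in p..q, Rfun A t / t ^ 2) -
      l * (Real.log q - Real.log p) =
      (Rfun A q / q - l) - (Rfun A p / p - l) +
        ((∫ t in p..q, Rfun A t / t ^ 2) - l * (Real.log q - Real.log p)) := by ring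
  rw [expand]
  calc |(Rfun A q / q - l) - (Rfun A p / p - l) +
        ((∫ t in p..q, Rfun A t / t ^ 2) - l * (Real.log q - Real.log p))|
      ≤ |Rfun A q / q - l| + |Rfun A p / p - l| +
        |(∫ t in p..q, Rfun A t / t ^ 2) - l * (Real.log q - Real.log p)| := by
        exact (abs_add_le _ _).trans (by gcongr; exact abs_sub _ _)
    _ ≤ ε + ε + ε * (Real.log q - Real.log p) := by gcongr
    _ = 2 * ε + ε * (Real.log q - Real.log p) := by ring

lemma key_estimate (hA : A ∈ Mcal) {l : ℝ} (hl : Tendsto (rho A) atTop (𝓝 l))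
    {ε : ℝ} (hε : 0 < ε) :
    ∃ C : ℝ, 0 ≤ C ∧ ∀ u v : ℝ, 1 ≤ u → u ≤ v →
      |(∫ t in u..v, ind A t / t) - l * (Real.log v - Real.log u)| ≤
        C + ε * (Real.log v - Real.log u) := by
  have hAm := mem_Mcal_measurableSet hA
  obtain ⟨N, hN⟩ := (Metric.tendsto_atTop.1 hl ε hε)
  set T : ℝ := max N 1 with hTdef
  have hT1 : 1 ≤ T := le_max_right N 1
  have hb : ∀ t, T ≤ t → |rho A t - l| ≤ ε := by
    intro t ht
    have := hN t ((le_max_left N 1).trans ht)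
    rw [Real.dist_eq] at this
    exact this.le
  have hlogT : 0 ≤ Real.log T := Real.log_nonneg hT1
  refine ⟨2 * ε + (1 + |l|) * Real.log T, by positivity, ?_⟩
  intro u v hu huv
  have hu0 : (0:ℝ) < u := lt_of_lt_of_le one_pos hu
  have hv0 : (0:ℝ) < v := lt_of_lt_of_le hu0 huv
  set w : ℝ := min (max u T) v with hwdef
  have huw : u ≤ w := le_min (le_max_left u T) huv
  have hwv : w ≤ v := min_le_right _ _
  have hw1 : 1 ≤ w := hu.trans huw
  have hw0 : (0:ℝ) < w := lt_of_lt_of_le one_pos hw1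
  have hsplit : (∫ t in u..w, ind A t / t) + (∫ t in w..v, ind A t / t) =
      ∫ t in u..v, ind A t / t :=
    intervalIntegral.integral_add_adjacent_intervals
      (intervalIntegrable_ind_div hAm hu0 huw) (intervalIntegrable_ind_div hAm hw0 hwv)
  -- bounds on logs
  have hlogu : Real.log u ≤ Real.log w := Real.log_le_log hu0 huw
  have hlogwv : Real.log w ≤ Real.log v := Real.log_le_log hw0 hwv
  have hlogw_le : Real.log w - Real.log u ≤ Real.log T := by
    have h1 : Real.log w ≤ Real.log (max u T) :=
      Real.log_le_log hw0 (min_le_left _ _)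
    rcases max_cases u T with ⟨heq, hle⟩ | ⟨heq, hlt⟩
    · rw [heq] at h1
      have : 0 ≤ Real.log u := Real.log_nonneg hu
      linarith
    · rw [heq] at h1
      have : 0 ≤ Real.log u := Real.log_nonneg hu
      linarith
  -- piece 1
  have hpiece1 : |∫ t in u..w, ind A t / t| ≤ Real.log w - Real.log u := by
    have hnn : 0 ≤ ∫ t in u..w, ind A t / t := by
      apply intervalIntegral.integral_nonneg huw
      intro s hs
      have : 0 < s := lt_of_lt_of_le hu0 hs.1
      exact div_nonneg (ind_nonneg A s) this.le
    rw [abs_of_nonneg hnn]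
    have hmono : (∫ t in u..w, ind A t / t) ≤ ∫ t in u..w, t⁻¹ := by
      apply intervalIntegral.integral_mono_on huw (intervalIntegrable_ind_div hAm hu0 huw)
      · apply ContinuousOn.intervalIntegrable
        apply continuousOn_inv₀.mono
        rw [Set.uIcc_of_le huw]
        intro t ht
        exact ne_of_gt (lt_of_lt_of_le hu0 ht.1)
      · intro s hs
        have hs0 : 0 < s := lt_of_lt_of_le hu0 hs.1
        rw [div_le_iff₀ hs0, inv_mul_cancel₀ hs0.ne']
        exact ind_le_one A s
    have hval : ∫ t in u..w, t⁻¹ = Real.log w - Real.log u := by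
      rw [integral_inv, Real.log_div hw0.ne' hu0.ne']
      rw [Set.uIcc_of_le huw]
      rintro ⟨ha, hb'⟩
      linarith
    linarith
  -- piece 2
  have hpiece2 : |(∫ t in w..v, ind A t / t) - l * (Real.log v - Real.log w)| ≤
      2 * ε + ε * (Real.log v - Real.log w) := by
    rcases eq_or_lt_of_le hwv with heq | hlt
    · rw [heq]
      simp only [intervalIntegral.integral_same, sub_self, mul_zero, zero_sub, abs_neg,
        abs_zero]
      positivity
    · have hTw : T ≤ w := by
        rcases min_cases (max u T) v with ⟨heq2, -⟩ | ⟨heq2, hle2⟩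
        · rw [hwdef, heq2]; exact le_max_right u T
        · exfalso
          rw [hwdef, heq2] at hlt
          exact lt_irrefl v hlt
      exact core_estimate hA hT1 hε.le hb hTw hwv
  -- combine
  have hlll : |l * (Real.log w - Real.log u)| ≤ |l| * Real.log T := by
    rw [abs_mul, abs_of_nonneg (by linarith : 0 ≤ Real.log w - Real.log u)]
    exact mul_le_mul_of_nonneg_left hlogw_le (abs_nonneg l)
  have expand : (∫ t in u..v, ind A t / t) - l * (Real.log v - Real.log u) =
      (∫ t in u..w, ind A t / t) +
      ((∫ t in w..v, ind A t / t) - l * (Real.log v - Real.log w)) -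
      l * (Real.log w - Real.log u) := by
    rw [← hsplit]; ring
  rw [expand]
  have htri : |(∫ t in u..w, ind A t / t) +
      ((∫ t in w..v, ind A t / t) - l * (Real.log v - Real.log w)) -
      l * (Real.log w - Real.log u)| ≤
      |∫ t in u..w, ind A t / t| +
      |(∫ t in w..v, ind A t / t) - l * (Real.log v - Real.log w)| +
      |l * (Real.log w - Real.log u)| :=
    (abs_sub _ _).trans (by gcongr; exact abs_add_le _ _)
  have hεv : ε * (Real.log v - Real.log w) ≤ ε * (Real.log v - Real.log u) := by
    apply mul_le_mul_of_nonneg_left _ hε.le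
    linarith
  calc _ ≤ |∫ t in u..w, ind A t / t| +
      |(∫ t in w..v, ind A t / t) - l * (Real.log v - Real.log w)| +
      |l * (Real.log w - Real.log u)| := htri
    _ ≤ (Real.log w - Real.log u) + (2 * ε + ε * (Real.log v - Real.log w)) +
        |l| * Real.log T := add_le_add (add_le_add hpiece1 hpiece2) hlll
    _ ≤ 2 * ε + (1 + |l|) * Real.log T + ε * (Real.log v - Real.log u) := by
        nlinarith [hlogw_le, hεv]

lemma mem_logSet_iff {y : ℝ} (hy : 0 ≤ y) : y ∈ logSet A ↔ Real.exp y ∈ A := by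
  constructor
  · rintro ⟨t, ⟨htA, ht1⟩, rfl⟩
    rwa [Real.exp_log (lt_of_lt_of_le one_pos ht1)]
  · intro h
    exact ⟨Real.exp y, ⟨h, Real.one_le_exp hy⟩, Real.log_exp y⟩

lemma ind_logSet {y : ℝ} (hy : 0 ≤ y) (A : Set ℝ) :
    ind (logSet A) y = ind A (Real.exp y) := by
  unfold ind
  by_cases h : Real.exp y ∈ A
  · rw [Set.indicator_of_mem ((mem_logSet_iff hy).2 h), Set.indicator_of_mem h]
  · rw [Set.indicator_of_notMem (fun hc => h ((mem_logSet_iff hy).1 hc)),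
      Set.indicator_of_notMem h]

lemma exp_image_Ioo (u v : ℝ) : Real.exp '' Set.Ioo u v = Set.Ioo (Real.exp u) (Real.exp v) := by
  ext y
  constructor
  · rintro ⟨t, ⟨h1, h2⟩, rfl⟩
    exact ⟨Real.exp_lt_exp.2 h1, Real.exp_lt_exp.2 h2⟩
  · rintro ⟨h1, h2⟩
    have hy0 : 0 < y := lt_trans (Real.exp_pos u) h1
    exact ⟨Real.log y, ⟨(Real.lt_log_iff_exp_lt hy0).2 h1, (Real.log_lt_iff_lt_exp hy0).2 h2⟩,
      Real.exp_log hy0⟩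

lemma integral_ind_logSet (hA : MeasurableSet A) {u v : ℝ} (hu : 0 ≤ u) (huv : u ≤ v) :
    ∫ y in u..v, ind (logSet A) y = ∫ t in Real.exp u..Real.exp v, ind A t / t := by
  rw [intervalIntegral.integral_of_le huv,
    intervalIntegral.integral_of_le (Real.exp_le_exp.2 huv),
    MeasureTheory.integral_Ioc_eq_integral_Ioo, MeasureTheory.integral_Ioc_eq_integral_Ioo]
  rw [← exp_image_Ioo u v]
  rw [MeasureTheory.integral_image_eq_integral_abs_deriv_smul measurableSet_Ioo
    (fun x _ => (Real.hasDerivAt_exp x).hasDerivWithinAt) (Real.exp_injective.injOn)]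
  apply MeasureTheory.setIntegral_congr_fun measurableSet_Ioo
  intro y hy
  have hy0 : 0 ≤ y := hu.trans hy.1.le
  show ind (logSet A) y = |Real.exp y| • (ind A (Real.exp y) / Real.exp y)
  rw [abs_of_pos (Real.exp_pos y), smul_eq_mul, ind_logSet hy0]
  field_simp

lemma log_image_Ico {c d : ℝ} (hcd : c ≤ d) :
    Real.log '' (Set.Ico c d ∩ Set.Ici 1) =
      Set.Ico (Real.log (max c 1)) (Real.log (max d 1)) := by
  ext y
  constructor
  · rintro ⟨t, ⟨⟨h1, h2⟩, h3⟩, rfl⟩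
    have ht0 : (0:ℝ) < t := lt_of_lt_of_le one_pos h3
    constructor
    · exact Real.log_le_log (by positivity) (max_le h1 h3)
    · exact Real.log_lt_log ht0 (lt_of_lt_of_le h2 (le_max_left d 1))
  · rintro ⟨hy1, hy2⟩
    have hlt : Real.log (max c 1) < Real.log (max d 1) := lt_of_le_of_lt hy1 hy2
    have hd1 : 1 < d := by
      by_contra hc
      push_neg at hc
      have : max d 1 ≤ max c 1 := by
        rw [max_eq_right hc]
        exact le_max_right c 1
      exact absurd (Real.log_le_log (by positivity) this) (not_le.2 hlt)
    have hy0 : 0 ≤ y := le_trans (Real.log_nonneg (le_max_right c 1)) hy1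
    refine ⟨Real.exp y, ⟨⟨?_, ?_⟩, Real.one_le_exp hy0⟩, Real.log_exp y⟩
    · calc c ≤ max c 1 := le_max_left c 1
        _ = Real.exp (Real.log (max c 1)) := (Real.exp_log (by positivity)).symm
        _ ≤ Real.exp y := Real.exp_le_exp.2 hy1
    · calc Real.exp y < Real.exp (Real.log (max d 1)) := Real.exp_lt_exp.2 hy2
        _ = max d 1 := Real.exp_log (by positivity)
        _ = d := max_eq_left hd1.le

lemma logSet_mem_Mcal (hA : A ∈ Mcal) : logSet A ∈ Mcal := by
  obtain ⟨a, ha0, hmono, rfl⟩ := hA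
  refine ⟨fun n => Real.log (max (a n) 1), Real.log_nonneg (le_max_right _ 1),
    fun m n h => Real.log_le_log (by positivity) (max_le_max (hmono h) le_rfl), ?_⟩
  rw [logSet, Set.iUnion_inter, Set.image_iUnion]
  apply Set.iUnion_congr
  intro i
  exact log_image_Ico (hmono (by omega : 2 * i ≤ 2 * i + 1))

lemma unif_sigma (hA : A ∈ Mcal) {l : ℝ} (hl : Tendsto (rho A) atTop (𝓝 l))
    {ε : ℝ} (hε : 0 < ε) :
    ∃ D₀ : ℝ, 1 ≤ D₀ ∧ ∀ D, D₀ ≤ D → ∀ x : ℝ, 0 < x →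
      |sigmaFn (logSet A) D x - l| ≤ ε := by
  obtain ⟨C, hC0, hC⟩ := key_estimate hA hl (half_pos hε)
  refine ⟨max 1 (2 * C / ε + 1), le_max_left _ _, ?_⟩
  intro D hD x hx
  have hD1 : (1:ℝ) ≤ D := le_trans (le_max_left _ _) hD
  have hD0 : (0:ℝ) < D := lt_of_lt_of_le one_pos hD1
  have hD2 : 2 * C / ε + 1 ≤ D := le_trans (le_max_right _ _) hD
  have hxD : x ≤ x + D := by linarith
  have hcv : sigmaFn (logSet A) D x =
      (1/D) * ∫ t in Real.exp x..Real.exp (x+D), ind A t / t := by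
    rw [sigmaFn, integral_ind_logSet (mem_Mcal_measurableSet hA) hx.le hxD]
  have hkey := hC (Real.exp x) (Real.exp (x+D)) (Real.one_le_exp hx.le)
    (Real.exp_le_exp.2 hxD)
  rw [Real.log_exp, Real.log_exp, show x + D - x = D by ring] at hkey
  rw [hcv]
  have heq : (1/D) * (∫ t in Real.exp x..Real.exp (x+D), ind A t / t) - l
      = (1/D) * ((∫ t in Real.exp x..Real.exp (x+D), ind A t / t) - l * D) := by
    field_simp
  rw [heq, abs_mul, abs_of_pos (by positivity : (0:ℝ) < 1/D)]
  have hCD : C ≤ ε / 2 * D := by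
    have h1 : ε / 2 * (2 * C / ε + 1) = C + ε / 2 := by field_simp
    have h2 := mul_le_mul_of_nonneg_left hD2 (half_pos hε).le
    rw [h1] at h2
    linarith
  calc 1/D * |(∫ t in Real.exp x..Real.exp (x+D), ind A t / t) - l * D|
      ≤ 1/D * (C + ε / 2 * D) := by gcongr
    _ ≤ 1/D * (ε / 2 * D + ε / 2 * D) := by
        apply mul_le_mul_of_nonneg_left _ (by positivity : (0:ℝ) ≤ 1/D)
        linarith
    _ = ε := by field_simp; norm_num

lemma rho_logSet_tendsto (hA : A ∈ Mcal) {l : ℝ}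
    (hl : Tendsto (rho A) atTop (𝓝 l)) :
    Tendsto (rho (logSet A)) atTop (𝓝 l) := by
  rw [Metric.tendsto_atTop]
  intro ε hε
  obtain ⟨C, hC0, hC⟩ := key_estimate hA hl (half_pos hε)
  refine ⟨max 1 (2 * C / ε + 1), fun x hx => ?_⟩
  have hx1 : (1:ℝ) ≤ x := le_trans (le_max_left _ _) hx
  have hx0 : (0:ℝ) < x := lt_of_lt_of_le one_pos hx1
  have hx2 : 2 * C / ε + 1 ≤ x := le_trans (le_max_right _ _) hx
  have hkey := hC 1 (Real.exp x) le_rfl (Real.one_le_exp hx0.le)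
  rw [Real.log_exp, Real.log_one, sub_zero] at hkey
  have hrho : rho (logSet A) x = (1/x) * ∫ t in (Real.exp 0)..(Real.exp x), ind A t / t := by
    rw [rho, if_neg hx0.ne', integral_ind_logSet (mem_Mcal_measurableSet hA) le_rfl hx0.le]
  rw [Real.dist_eq, hrho, Real.exp_zero]
  have heq : (1/x) * (∫ t in (1:ℝ)..Real.exp x, ind A t / t) - l
      = (1/x) * ((∫ t in (1:ℝ)..Real.exp x, ind A t / t) - l * x) := by field_simp
  rw [heq, abs_mul, abs_of_pos (by positivity : (0:ℝ) < 1/x)]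
  calc 1/x * |(∫ t in (1:ℝ)..Real.exp x, ind A t / t) - l * x|
      ≤ 1/x * (C + ε / 2 * x) := by gcongr
    _ < 1/x * (ε * x) := by
        apply mul_lt_mul_of_pos_left _ (by positivity : (0:ℝ) < 1/x)
        have h1 : ε / 2 * (2 * C / ε + 1) = C + ε / 2 := by field_simp
        have h2 := mul_le_mul_of_nonneg_left hx2 (half_pos hε).le
        rw [h1] at h2
        nlinarith
    _ = ε := by field_simp

lemma sup_tendsto (hA : A ∈ Mcal) {l : ℝ} (hl : Tendsto (rho A) atTop (𝓝 l)) :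
    Tendsto (fun D => ⨆ x : Set.Ioi (0:ℝ), sigmaFn (logSet A) D ↑x) atTop (𝓝 l) := by
  haveI : Nonempty (Set.Ioi (0:ℝ)) := ⟨⟨1, by norm_num⟩⟩
  rw [Metric.tendsto_atTop]
  intro ε hε
  obtain ⟨D₀, hD₀1, hD₀⟩ := unif_sigma hA hl (half_pos hε)
  refine ⟨D₀, fun D hD => ?_⟩
  have hb := hD₀ D hD
  have hub : ∀ x : Set.Ioi (0:ℝ), sigmaFn (logSet A) D ↑x ≤ l + ε/2 := fun x => by
    linarith [(abs_le.1 (hb ↑x x.2)).2]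
  have hlb : ∀ x : Set.Ioi (0:ℝ), l - ε/2 ≤ sigmaFn (logSet A) D ↑x := fun x => by
    linarith [(abs_le.1 (hb ↑x x.2)).1]
  have hsup_le : (⨆ x : Set.Ioi (0:ℝ), sigmaFn (logSet A) D ↑x) ≤ l + ε/2 := ciSup_le hub
  have hbdd : BddAbove (Set.range fun x : Set.Ioi (0:ℝ) => sigmaFn (logSet A) D ↑x) := by
    refine ⟨l + ε/2, ?_⟩
    rintro y ⟨x, rfl⟩
    exact hub x
  have hle_sup : l - ε/2 ≤ ⨆ x : Set.Ioi (0:ℝ), sigmaFn (logSet A) D ↑x :=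
    le_trans (hlb ⟨1, by norm_num⟩) (le_ciSup hbdd ⟨1, by norm_num⟩)
  rw [Real.dist_eq]
  have : |(⨆ x : Set.Ioi (0:ℝ), sigmaFn (logSet A) D ↑x) - l| ≤ ε/2 :=
    abs_le.2 ⟨by linarith, by linarith⟩
  linarith [half_lt_self hε]

lemma inf_tendsto (hA : A ∈ Mcal) {l : ℝ} (hl : Tendsto (rho A) atTop (𝓝 l)) :
    Tendsto (fun D => ⨅ x : Set.Ioi (0:ℝ), sigmaFn (logSet A) D ↑x) atTop (𝓝 l) := by
  haveI : Nonempty (Set.Ioi (0:ℝ)) := ⟨⟨1, by norm_num⟩⟩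
  rw [Metric.tendsto_atTop]
  intro ε hε
  obtain ⟨D₀, hD₀1, hD₀⟩ := unif_sigma hA hl (half_pos hε)
  refine ⟨D₀, fun D hD => ?_⟩
  have hb := hD₀ D hD
  have hub : ∀ x : Set.Ioi (0:ℝ), sigmaFn (logSet A) D ↑x ≤ l + ε/2 := fun x => by
    linarith [(abs_le.1 (hb ↑x x.2)).2]
  have hlb : ∀ x : Set.Ioi (0:ℝ), l - ε/2 ≤ sigmaFn (logSet A) D ↑x := fun x => by
    linarith [(abs_le.1 (hb ↑x x.2)).1]
  have hinf_ge : l - ε/2 ≤ ⨅ x : Set.Ioi (0:ℝ), sigmaFn (logSet A) D ↑x := le_ciInf hlb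
  have hbdd : BddBelow (Set.range fun x : Set.Ioi (0:ℝ) => sigmaFn (logSet A) D ↑x) := by
    refine ⟨l - ε/2, ?_⟩
    rintro y ⟨x, rfl⟩
    exact hlb x
  have hinf_le : (⨅ x : Set.Ioi (0:ℝ), sigmaFn (logSet A) D ↑x) ≤ l + ε/2 :=
    le_trans (ciInf_le hbdd ⟨1, by norm_num⟩) (hub ⟨1, by norm_num⟩)
  rw [Real.dist_eq]
  have : |(⨅ x : Set.Ioi (0:ℝ), sigmaFn (logSet A) D ↑x) - l| ≤ ε/2 :=
    abs_le.2 ⟨by linarith, by linarith⟩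
  linarith [half_lt_self hε]

lemma main_conv (hA : A ∈ Mcal) {l : ℝ} (hl : Tendsto (rho A) atTop (𝓝 l)) :
    logSet A ∈ Wuni ∧ Tendsto (rho (logSet A)) atTop (𝓝 l) := by
  constructor
  · refine ⟨logSet_mem_Mcal hA, ?_⟩
    have hU : Ufn (logSet A) = l := (sup_tendsto hA hl).limsup_eq
    have hL : Lfn (logSet A) = l := (inf_tendsto hA hl).liminf_eq
    rw [hL, hU]
  · exact rho_logSet_tendsto hA hl

end Aux

/-- `𝓒 ⊆ 𝓐^uni`, and for `A ∈ 𝓒` with natural density `λ(A) = l`, the natural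
density of `log(A)` exists and `α(A) = λ(log(A)) = λ(A) = l`. -/
theorem stmt2 :
    Ccal ⊆ Auni ∧
    ∀ A ∈ Ccal, ∀ l : ℝ, Tendsto (rho A) atTop (𝓝 l) →
      Tendsto (rho (logSet A)) atTop (𝓝 l) ∧ alphaFn A = l := by
  constructor
  · rintro A ⟨hA, l, hl⟩
    exact ⟨hA, (main_conv hA hl).1⟩
  · rintro A ⟨hA, -⟩ l hl
    have h := main_conv hA hl
    refine ⟨h.2, ?_⟩
    rw [alphaFn, lam]
    exact h.2.limUnder_eq

end UPN
end
end

section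
/- For all A, B ∈ 𝓜 and every x > 0, one has ρ_{A∘B}(x) = ρ_A(x) · ρ_B(x · ρ_A(x)) (equivalently, ρ_{A∘B}(x) = ρ_A(x) · ρ_B(S_A(x)), using ρ_B(0) = 0 when S_A(x) = 0). -/
open MeasureTheory Filter Set Topology

noncomputable section

namespace UPN

-- Auxiliary lemmas
lemma mcal_meas {A : Set ℝ} (hA : A ∈ Mcal) : MeasurableSet A := by
  obtain ⟨a, -, -, rfl⟩ := hA
  exact MeasurableSet.iUnion fun i => measurableSet_Ico

lemma vol_inter_lt_top (A : Set ℝ) (x : ℝ) : volume (A ∩ Set.Ico 0 x) < ⊤ :=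
  lt_of_le_of_lt (measure_mono inter_subset_right)
    (by rw [Real.volume_Ico]; exact ENNReal.ofReal_lt_top)

lemma Sfn_nonneg (A : Set ℝ) (x : ℝ) : 0 ≤ Sfn A x := ENNReal.toReal_nonneg

lemma Sfn_zero (A : Set ℝ) : Sfn A 0 = 0 := by simp [Sfn]

lemma Sfn_mono (A : Set ℝ) : Monotone (Sfn A) := fun a b hab =>
  ENNReal.toReal_mono (vol_inter_lt_top A b).ne
    (measure_mono (inter_subset_inter_right _ (Set.Ico_subset_Ico_right hab)))

lemma vol_eq_ofReal_sub {A : Set ℝ} (hA : MeasurableSet A) (a b : ℝ)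
    (h0 : 0 ≤ a) (hab : a ≤ b) :
    volume (A ∩ Set.Ico a b) = ENNReal.ofReal (Sfn A b - Sfn A a) := by
  have hsplit : A ∩ Set.Ico 0 b = (A ∩ Set.Ico 0 a) ∪ (A ∩ Set.Ico a b) := by
    rw [← Set.inter_union_distrib_left, Set.Ico_union_Ico_eq_Ico h0 hab]
  have hdisj : Disjoint (A ∩ Set.Ico 0 a) (A ∩ Set.Ico a b) :=
    (Set.Ico_disjoint_Ico_same).mono inter_subset_right inter_subset_right
  have hadd : volume (A ∩ Set.Ico 0 b) = volume (A ∩ Set.Ico 0 a) + volume (A ∩ Set.Ico a b) := by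
    rw [hsplit, measure_union hdisj (hA.inter measurableSet_Ico)]
  have hfin : volume (A ∩ Set.Ico a b) ≠ ⊤ := by
    refine (lt_of_le_of_lt (measure_mono inter_subset_right) ?_).ne
    rw [Real.volume_Ico]; exact ENNReal.ofReal_lt_top
  have h1 : Sfn A b = Sfn A a + (volume (A ∩ Set.Ico a b)).toReal := by
    rw [Sfn, hadd, ENNReal.toReal_add (vol_inter_lt_top A a).ne hfin]; rfl
  rw [h1]
  simp only [add_sub_cancel_left]
  exact (ENNReal.ofReal_toReal hfin).symm

lemma Sfn_lipschitz (A : Set ℝ) : LipschitzWith 1 (Sfn A) := by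
  apply LipschitzWith.of_dist_le_mul
  intro a b
  wlog hab : b ≤ a generalizing a b
  · rw [dist_comm, dist_comm a b]; exact this b a (le_of_not_ge hab)
  rw [Real.dist_eq, Real.dist_eq, NNReal.coe_one, one_mul,
    abs_of_nonneg (sub_nonneg.mpr (Sfn_mono A hab))]
  have hsub : Set.Ico (0:ℝ) a ⊆ Set.Ico 0 b ∪ Set.Ico (max b 0) a := by
    intro y hy
    rcases lt_or_ge y b with h | h
    · exact Or.inl ⟨hy.1, h⟩
    · exact Or.inr ⟨max_le h hy.1, hy.2⟩
  have h2 : volume (A ∩ Set.Ico 0 a) ≤ volume (A ∩ Set.Ico 0 b) + ENNReal.ofReal (a - b) := by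
    calc volume (A ∩ Set.Ico 0 a) ≤ volume ((A ∩ Set.Ico 0 b) ∪ Set.Ico (max b 0) a) := by
          apply measure_mono; intro y ⟨hyA, hy⟩
          rcases hsub hy with h | h
          · exact Or.inl ⟨hyA, h⟩
          · exact Or.inr h
      _ ≤ volume (A ∩ Set.Ico 0 b) + volume (Set.Ico (max b 0) a) := measure_union_le _ _
      _ ≤ volume (A ∩ Set.Ico 0 b) + ENNReal.ofReal (a - b) := by
          gcongr
          rw [Real.volume_Ico]
          exact ENNReal.ofReal_le_ofReal (by have := le_max_left b 0; linarith)
  have := ENNReal.toReal_mono (by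
      exact ENNReal.add_ne_top.mpr ⟨(vol_inter_lt_top A b).ne, ENNReal.ofReal_ne_top⟩) h2
  rw [ENNReal.toReal_add (vol_inter_lt_top A b).ne ENNReal.ofReal_ne_top,
    ENNReal.toReal_ofReal (sub_nonneg.mpr hab)] at this
  have hfin := this
  rw [abs_of_nonneg (sub_nonneg.mpr hab)]
  unfold Sfn
  linarith

lemma Sfn_continuous (A : Set ℝ) : Continuous (Sfn A) := (Sfn_lipschitz A).continuous

lemma key_g {A : Set ℝ} (hA : MeasurableSet A) {x : ℝ} (hx : 0 < x) (t : ℝ) :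
    volume (A ∩ Set.Ico 0 x ∩ Sfn A ⁻¹' Set.Iio t) = ENNReal.ofReal (min t (Sfn A x)) := by
  rcases le_or_gt t 0 with ht | ht
  · have hempty : A ∩ Set.Ico 0 x ∩ Sfn A ⁻¹' Set.Iio t = ∅ := by
      ext y
      simp only [Set.mem_inter_iff, Set.mem_preimage, Set.mem_Iio, Set.mem_empty_iff_false,
        iff_false, not_and]
      intro _ hlt
      exact absurd (lt_of_lt_of_le hlt ht) (not_lt.mpr (Sfn_nonneg A y))
    rw [hempty, measure_empty, Eq.comm, ENNReal.ofReal_eq_zero]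
    exact le_trans (min_le_left _ _) ht
  rcases lt_or_ge (Sfn A x) t with hts | hts
  · have hss : A ∩ Set.Ico 0 x ∩ Sfn A ⁻¹' Set.Iio t = A ∩ Set.Ico 0 x := by
      ext y
      refine ⟨fun h => h.1, fun h => ⟨h, ?_⟩⟩
      exact lt_of_le_of_lt (Sfn_mono A h.2.2.le) hts
    rw [hss, min_eq_right hts.le]
    simpa [Sfn_zero] using vol_eq_ofReal_sub hA 0 x le_rfl hx.le
  · set S : Set ℝ := Set.Icc 0 x ∩ Sfn A ⁻¹' {t} with hSdef
    have hne : S.Nonempty := by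
      obtain ⟨u, hu, hut⟩ := intermediate_value_Icc hx.le (Sfn_continuous A).continuousOn
        (show t ∈ Set.Icc (Sfn A 0) (Sfn A x) from ⟨by rw [Sfn_zero]; exact ht.le, hts⟩)
      exact ⟨u, hu, hut⟩
    have hcl : IsClosed S := isClosed_Icc.inter (isClosed_singleton.preimage (Sfn_continuous A))
    have hbdd : BddBelow S := ⟨0, fun y hy => hy.1.1⟩
    have humem : sInf S ∈ S := hcl.csInf_mem hne hbdd
    set u := sInf S with hu
    have hut : Sfn A u = t := humem.2
    have hux : u ∈ Set.Icc 0 x := humem.1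
    have hEq : A ∩ Set.Ico 0 x ∩ Sfn A ⁻¹' Set.Iio t = A ∩ Set.Ico 0 u := by
      ext y
      simp only [Set.mem_inter_iff, Set.mem_preimage, Set.mem_Iio, Set.mem_Ico]
      constructor
      · rintro ⟨⟨hyA, hy0, hyx⟩, hyt⟩
        refine ⟨hyA, hy0, ?_⟩
        by_contra h
        exact absurd (hut ▸ Sfn_mono A (not_lt.mp h)) (not_le.mpr hyt)
      · rintro ⟨hyA, hy0, hyu⟩
        have hyx : y < x := lt_of_lt_of_le hyu hux.2
        refine ⟨⟨hyA, hy0, hyx⟩, ?_⟩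
        rcases (hut ▸ Sfn_mono A hyu.le : Sfn A y ≤ t).lt_or_eq with h | h
        · exact h
        · exact absurd (csInf_le hbdd ⟨⟨hy0, hyx.le⟩, h⟩) (not_le.mpr hyu)
    rw [hEq, vol_eq_ofReal_sub hA 0 u le_rfl hux.1, Sfn_zero, sub_zero, hut, min_eq_left hts]

lemma key_interval {A : Set ℝ} (hA : MeasurableSet A) {x : ℝ} (hx : 0 < x)
    {b b' : ℝ} (hb0 : 0 ≤ b) (hbb : b ≤ b') :
    volume (A ∩ Set.Ico 0 x ∩ Sfn A ⁻¹' Set.Ico b b') =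
      volume (Set.Ico b b' ∩ Set.Ico 0 (Sfn A x)) := by
  have hs : 0 ≤ Sfn A x := Sfn_nonneg A x
  have hdiff : A ∩ Set.Ico 0 x ∩ Sfn A ⁻¹' Set.Ico b b' =
      (A ∩ Set.Ico 0 x ∩ Sfn A ⁻¹' Set.Iio b') \ (A ∩ Set.Ico 0 x ∩ Sfn A ⁻¹' Set.Iio b) := by
    have h1 : Set.Ico b b' = Set.Iio b' \ Set.Iio b := by
      ext y; simp only [Set.mem_Ico, Set.mem_diff, Set.mem_Iio, not_lt]; exact and_comm
    rw [h1, Set.preimage_diff, Set.inter_diff_distrib_left]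
  have hsub : A ∩ Set.Ico 0 x ∩ Sfn A ⁻¹' Set.Iio b ⊆ A ∩ Set.Ico 0 x ∩ Sfn A ⁻¹' Set.Iio b' :=
    Set.inter_subset_inter_right _ (Set.preimage_mono (Set.Iio_subset_Iio hbb))
  have hmb : MeasurableSet (A ∩ Set.Ico 0 x ∩ Sfn A ⁻¹' Set.Iio b) :=
    (hA.inter measurableSet_Ico).inter (measurableSet_Iio.preimage (Sfn_continuous A).measurable)
  have hfinb : volume (A ∩ Set.Ico 0 x ∩ Sfn A ⁻¹' Set.Iio b) ≠ ⊤ :=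
    (lt_of_le_of_lt (measure_mono (fun y hy => hy.1.2)) (by
      rw [Real.volume_Ico]; exact ENNReal.ofReal_lt_top)).ne
  rw [hdiff, measure_diff hsub hmb.nullMeasurableSet hfinb, key_g hA hx b', key_g hA hx b,
    Set.Ico_inter_Ico, Real.volume_Ico]
  rw [← ENNReal.ofReal_sub _ (le_min hb0 hs)]
  rcases le_or_gt b (Sfn A x) with h | h
  · rw [min_eq_left h, max_eq_left hb0]
  · have h1 : min b' (Sfn A x) - min b (Sfn A x) ≤ 0 := by
      rw [min_eq_right h.le]
      simp [min_le_right]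
    have h2 : min b' (Sfn A x) - max b 0 ≤ 0 := by
      rw [max_eq_left hb0]
      have := min_le_right b' (Sfn A x)
      linarith
    rw [ENNReal.ofReal_eq_zero.mpr h1, ENNReal.ofReal_eq_zero.mpr h2]

lemma key_main {A B : Set ℝ} (hA : MeasurableSet A) (hB : B ∈ Mcal) {x : ℝ} (hx : 0 < x) :
    volume (A ∩ Set.Ico 0 x ∩ Sfn A ⁻¹' B) = volume (B ∩ Set.Ico 0 (Sfn A x)) := by
  obtain ⟨b, hb0, hbmono, rfl⟩ := hB
  have hb0' : ∀ i, 0 ≤ b i := fun i => le_trans hb0 (hbmono (Nat.zero_le _))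
  have hkey : ∀ i j : ℕ, i < j →
      Disjoint (Set.Ico (b (2*i)) (b (2*i+1))) (Set.Ico (b (2*j)) (b (2*j+1))) := by
    intro i j h
    refine Set.Ico_disjoint_Ico.mpr ?_
    refine le_trans (min_le_left _ _) (le_trans (hbmono (by omega : 2*i+1 ≤ 2*j))
      (le_max_right _ _))
  have hdisj : Pairwise (Function.onFun Disjoint fun i => Set.Ico (b (2*i)) (b (2*i+1))) := by
    intro i j hij
    rcases hij.lt_or_gt with h | h
    · exact hkey i j h
    · exact (hkey j i h).symm
  have hdisjL : Pairwise (Function.onFun Disjoint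
      fun i => A ∩ Set.Ico 0 x ∩ Sfn A ⁻¹' Set.Ico (b (2*i)) (b (2*i+1))) := fun i j hij =>
    (((hdisj hij).preimage (Sfn A)).mono inter_subset_right inter_subset_right)
  have hdisjR : Pairwise (Function.onFun Disjoint
      fun i => Set.Ico (b (2*i)) (b (2*i+1)) ∩ Set.Ico 0 (Sfn A x)) := fun i j hij =>
    ((hdisj hij).mono inter_subset_left inter_subset_left)
  have hL : A ∩ Set.Ico 0 x ∩ Sfn A ⁻¹' (⋃ i, Set.Ico (b (2*i)) (b (2*i+1))) =
      ⋃ i, (A ∩ Set.Ico 0 x ∩ Sfn A ⁻¹' Set.Ico (b (2*i)) (b (2*i+1))) := by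
    rw [Set.preimage_iUnion, Set.inter_iUnion]
  have hR : (⋃ i, Set.Ico (b (2*i)) (b (2*i+1))) ∩ Set.Ico 0 (Sfn A x) =
      ⋃ i, (Set.Ico (b (2*i)) (b (2*i+1)) ∩ Set.Ico 0 (Sfn A x)) := by
    rw [Set.iUnion_inter]
  rw [hL, hR, measure_iUnion hdisjL (fun i => (hA.inter measurableSet_Ico).inter
      (measurableSet_Ico.preimage (Sfn_continuous A).measurable)),
    measure_iUnion hdisjR (fun i => measurableSet_Ico.inter measurableSet_Ico)]
  exact tsum_congr fun i => key_interval hA hx (hb0' _) (hbmono (by omega))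

lemma integral_ind {S : Set ℝ} (hS : MeasurableSet S) {x : ℝ} (hx : 0 ≤ x) :
    ∫ y in (0:ℝ)..x, ind S y = (volume (S ∩ Set.Ico 0 x)).toReal := by
  rw [intervalIntegral.integral_of_le hx]
  unfold ind
  rw [MeasureTheory.setIntegral_indicator hS, MeasureTheory.setIntegral_const, smul_eq_mul,
    mul_one]
  rw [Set.inter_comm]
  rw [measureReal_def]
  congr 1
  apply measure_congr
  exact (Filter.EventuallyEq.inter (Filter.EventuallyEq.refl _ S)
    (Ico_ae_eq_Ioc : Set.Ico (0:ℝ) x =ᵐ[volume] Set.Ioc 0 x)).symm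

lemma rho_eq_s12 {S : Set ℝ} (hS : MeasurableSet S) {y : ℝ} (hy : 0 ≤ y) :
    rho S y = Sfn S y / y := by
  rcases eq_or_lt_of_le hy with h0 | h0
  · rw [rho, if_pos h0.symm, ← h0, Sfn_zero, zero_div]
  · rw [rho, if_neg h0.ne', integral_ind hS h0.le]
    have h : (volume (S ∩ Set.Ico 0 y)).toReal = Sfn S y := rfl
    rw [h]; ring


/-- For `A, B ∈ 𝓜` and `x > 0`:
`ρ_{A∘B}(x) = ρ_A(x) · ρ_B(x·ρ_A(x))` and equivalently
`ρ_{A∘B}(x) = ρ_A(x) · ρ_B(S_A(x))`. -/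
theorem stmt12 (A B : Set ℝ) (hA : A ∈ Mcal) (hB : B ∈ Mcal)
    (x : ℝ) (hx : 0 < x) :
    rho (thin A B) x = rho A x * rho B (x * rho A x) ∧
    rho (thin A B) x = rho A x * rho B (Sfn A x) := by
  have hAm := mcal_meas hA
  have hBm := mcal_meas hB
  have hs : 0 ≤ Sfn A x := Sfn_nonneg A x
  have hthin_meas : MeasurableSet (thin A B) := by
    have h : thin A B = A ∩ Sfn A ⁻¹' B := rfl
    rw [h]; exact hAm.inter (hBm.preimage (Sfn_continuous A).measurable)
  have hset : thin A B ∩ Set.Ico 0 x = A ∩ Set.Ico 0 x ∩ Sfn A ⁻¹' B := by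
    ext y
    simp only [thin, Set.mem_inter_iff, Set.mem_setOf_eq, Set.mem_preimage]
    tauto
  have hvol : Sfn (thin A B) x = Sfn B (Sfn A x) := by
    have h : Sfn (thin A B) x = (volume (thin A B ∩ Set.Ico 0 x)).toReal := rfl
    rw [h, hset, key_main hAm hB hx]; rfl
  have hmain : rho (thin A B) x = rho A x * rho B (Sfn A x) := by
    rw [rho_eq_s12 hthin_meas hx.le, rho_eq_s12 hAm hx.le, rho_eq_s12 hBm hs, hvol]
    rcases eq_or_lt_of_le hs with h0 | h0
    · rw [← h0, Sfn_zero]; simp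
    · field_simp
  have hSA : x * rho A x = Sfn A x := by
    rw [rho_eq_s12 hAm hx.le]
    field_simp
  exact ⟨by rw [hSA]; exact hmain, hmain⟩

end UPN
end
end
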